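/- For a = 4s⁴t²(s² + t²)(s⁶ - s⁴t² - 5s²t⁴ + t⁶)², b = (s⁴ - t⁴)²(s⁶ - s⁴t² - 5s²t⁴ + t⁶)², c = 4s²t⁴(s² + t²)(3s⁶ + s⁴t² + s²t⁴ - t⁶)², the three elementary symmetric functions a + b + c, ab + bc + ca, and abc are all perfect squares. -/
import Mathlib

theorem parmsol3 (s t : ℤ) :
    let a := 4 * s ^ 4 * t ^ 2 * (s ^ 2 + t ^ 2) *
      (s ^ 6 - s ^ 4 * t ^ 2 - 5 * s ^ 2 * t ^ 4 + t ^ 6) ^ 2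
    let b := (s ^ 4 - t ^ 4) ^ 2 *
      (s ^ 6 - s ^ 4 * t ^ 2 - 5 * s ^ 2 * t ^ 4 + t ^ 6) ^ 2
    let c := 4 * s ^ 2 * t ^ 4 * (s ^ 2 + t ^ 2) *
      (3 * s ^ 6 + s ^ 4 * t ^ 2 + s ^ 2 * t ^ 4 - t ^ 6) ^ 2
    (∃ f : ℤ, a + b + c = f ^ 2) ∧ (∃ g : ℤ, a * b + b * c + c * a = g ^ 2) ∧
      (∃ k : ℤ, a * b * c = k ^ 2) := by
  refine ⟨⟨s^10 + s^8*t^2 + 10*s^6*t^4 + 6*s^4*t^6 - 3*s^2*t^8 + t^10, by ring⟩,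
    ⟨2*s^19*t + 6*s^17*t^3 + 4*s^15*t^5 - 52*s^13*t^7 - 120*s^11*t^9 - 8*s^9*t^11
      + 60*s^7*t^13 - 12*s^5*t^15 - 10*s^3*t^17 + 2*s*t^19, by ring⟩,
    ⟨12*s^27*t^3 - 8*s^25*t^5 - 144*s^23*t^7 - 8*s^21*t^9 + 524*s^19*t^11 + 368*s^17*t^13
      - 320*s^15*t^15 - 464*s^13*t^17 - 156*s^11*t^19 + 152*s^9*t^21 + 80*s^7*t^23
      - 40*s^5*t^25 + 4*s^3*t^27, by ring⟩⟩
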